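/- Let K ≥ 1, let w_1, …, w_K ≥ 0 with not all zero, and let (s_i^{(n)})_{1 ≤ i ≤ n} be triangular arrays of strictly increasing points in [0,1]. With b_{i,j,k,ℓ} as in the previous definition, define A_n = (2/n) ∑_{i=1}^{n-1} ∑_{j=i+1}^{min(n,i+K)} ∑_{k=1}^{n-1} ∑_{ℓ=k+1}^{min(n,k+K)} w_{j-i} w_{ℓ-k} b_{i,j,k,ℓ}. Then lim inf_{n→∞} A_n ≥ 2 (∑_{k=1}^K w_k)². -/

import Mathlib

open Finset Filter

noncomputable def bCoef (s : ℕ → ℝ) (i j k l : ℕ) : ℝ :=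
  if i ≤ k then
    (if j ≤ k then 0
     else if j ≤ l then (s j - s k) ^ 2 / ((s j - s i) * (s l - s k))
     else (s l - s k) / (s j - s i))
  else
    (if l ≤ i then 0
     else if l ≤ j then (s l - s i) ^ 2 / ((s l - s k) * (s j - s i))
     else (s j - s i) / (s l - s k))

/-! ### Auxiliary definitions -/

noncomputable def gg (s : ℕ → ℝ) (m : ℕ) : ℝ := s (m + 1) - s m

noncomputable def ffi (i j m : ℕ) : ℝ := if i ≤ m ∧ m < j then 1 else 0

noncomputable def qq (w s : ℕ → ℝ) (i j m m' : ℕ) : ℝ :=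
  ffi i j m * ffi i j m' * (w (j - i) / (s j - s i))

def PF (K n : ℕ) : Finset ((_ : ℕ) × ℕ) :=
  (Finset.Icc 1 (n - 1)).sigma (fun i => Finset.Icc (i + 1) (min n (i + K)))

noncomputable def ccP (K n : ℕ) (w s : ℕ → ℝ) (m m' : ℕ) : ℝ :=
  ∑ p ∈ PF K n, qq w s p.1 p.2 m m'

noncomputable def NN (K n m m' : ℕ) : ℝ :=
  ∑ p ∈ PF K n, ffi p.1 p.2 m * ffi p.1 p.2 m'

lemma mem_PF {K n : ℕ} {p : (_ : ℕ) × ℕ} (hp : p ∈ PF K n) :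
    1 ≤ p.1 ∧ p.1 < p.2 ∧ p.2 ≤ n ∧ p.2 ≤ p.1 + K := by
  simp only [PF, Finset.mem_sigma, Finset.mem_Icc] at hp
  omega

lemma ffi_nonneg (i j m : ℕ) : 0 ≤ ffi i j m := by
  unfold ffi; split <;> norm_num

lemma ffi_le_one (i j m : ℕ) : ffi i j m ≤ 1 := by
  unfold ffi; split <;> norm_num

lemma slt (n : ℕ) (s : ℕ → ℝ) (hmono : ∀ a, 1 ≤ a → a < n → s a < s (a + 1)) :
    ∀ a b, 1 ≤ a → a < b → b ≤ n → s a < s b := by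
  intro a b ha hab hbn
  induction b with
  | zero => omega
  | succ b ih =>
    rcases Nat.lt_or_ge a b with h | h
    · exact (ih h (by omega)).trans (hmono b (by omega) (by omega))
    · have hab' : a = b := by omega
      subst hab'
      exact hmono a ha (by omega)

lemma sle (n : ℕ) (s : ℕ → ℝ) (hmono : ∀ a, 1 ≤ a → a < n → s a < s (a + 1))
    (a b : ℕ) (ha : 1 ≤ a) (hab : a ≤ b) (hbn : b ≤ n) : s a ≤ s b := by
  rcases eq_or_lt_of_le hab with h | h
  · rw [h]
  · exact (slt n s hmono a b ha h hbn).le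

lemma telesc (s : ℕ → ℝ) {a b : ℕ} (h : a ≤ b) :
    ∑ m ∈ Finset.Ico a b, gg s m = s b - s a := by
  unfold gg
  rw [Finset.sum_Ico_eq_sub _ h, Finset.sum_range_sub, Finset.sum_range_sub]
  ring

lemma overlap_sum (n : ℕ) (s : ℕ → ℝ) (i j k l : ℕ)
    (hi : 1 ≤ i) (hj : j ≤ n) (hk : 1 ≤ k) (hl : l ≤ n) :
    ∑ m ∈ Finset.Icc 1 (n - 1), ffi i j m * ffi k l m * gg s m =
      if max i k < min j l then s (min j l) - s (max i k) else 0 := by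
  have h1 : ∀ m, ffi i j m * ffi k l m * gg s m
      = if max i k ≤ m ∧ m < min j l then gg s m else 0 := by
    intro m
    simp only [ffi]
    by_cases hA : i ≤ m ∧ m < j <;> by_cases hB : k ≤ m ∧ m < l
    · rw [if_pos hA, if_pos hB, if_pos (by omega)]; ring
    · rw [if_pos hA, if_neg hB, if_neg (by omega)]; ring
    · rw [if_neg hA, if_pos hB, if_neg (by omega)]; ring
    · rw [if_neg hA, if_neg hB, if_neg (by omega)]; ring
  rw [Finset.sum_congr rfl fun m _ => h1 m, Finset.sum_ite, Finset.sum_const_zero, add_zero]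
  have h2 : (Finset.Icc 1 (n - 1)).filter (fun m => max i k ≤ m ∧ m < min j l)
      = Finset.Ico (max i k) (min j l) := by
    ext m
    simp only [Finset.mem_filter, Finset.mem_Icc, Finset.mem_Ico]
    omega
  rw [h2]
  by_cases hC : max i k < min j l
  · rw [if_pos hC, telesc s hC.le]
  · rw [if_neg hC, Finset.Ico_eq_empty (by omega), Finset.sum_empty]

lemma quad_eq (K n : ℕ) (w s : ℕ → ℝ)
    (hmono : ∀ a, 1 ≤ a → a < n → s a < s (a + 1))
    (i j k l : ℕ) (hi : 1 ≤ i) (hij : i < j) (hj : j ≤ n)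
    (hk : 1 ≤ k) (hkl : k < l) (hl : l ≤ n) :
    w (j - i) * w (l - k) * bCoef s i j k l =
      ∑ m ∈ Finset.Icc 1 (n - 1), ∑ m' ∈ Finset.Icc 1 (n - 1),
        gg s m * gg s m' * qq w s i j m m' * qq w s k l m m' := by
  have hij' : s i < s j := slt n s hmono i j hi hij hj
  have hkl' : s k < s l := slt n s hmono k l hk hkl hl
  have ha : s j - s i ≠ 0 := sub_ne_zero.2 hij'.ne'
  have hb : s l - s k ≠ 0 := sub_ne_zero.2 hkl'.ne'
  have hO := overlap_sum n s i j k l hi hj hk hl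
  have h2 : (∑ m ∈ Finset.Icc 1 (n - 1), ∑ m' ∈ Finset.Icc 1 (n - 1),
      gg s m * gg s m' * qq w s i j m m' * qq w s k l m m')
      = ((∑ m ∈ Finset.Icc 1 (n - 1), ffi i j m * ffi k l m * gg s m) *
          (∑ m' ∈ Finset.Icc 1 (n - 1), ffi i j m' * ffi k l m' * gg s m')) *
          ((w (j - i) / (s j - s i)) * (w (l - k) / (s l - s k))) := by
    rw [Finset.sum_mul_sum, Finset.sum_mul]
    refine Finset.sum_congr rfl fun m _ => ?_
    rw [Finset.sum_mul]
    refine Finset.sum_congr rfl fun m' _ => ?_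
    simp only [qq]
    ring
  rw [h2, hO]
  by_cases hik : i ≤ k
  · simp only [bCoef, if_pos hik]
    by_cases h1 : j ≤ k
    · rw [if_pos h1, if_neg (by omega : ¬ max i k < min j l)]
      ring
    · rw [if_neg h1]
      by_cases h3 : j ≤ l
      · rw [if_pos h3, if_pos (by omega : max i k < min j l),
          (by omega : max i k = k), (by omega : min j l = j)]
        field_simp
      · rw [if_neg h3, if_pos (by omega : max i k < min j l),
          (by omega : max i k = k), (by omega : min j l = l)]
        field_simp
  · simp only [bCoef, if_neg hik]
    by_cases h1 : l ≤ i
    · rw [if_pos h1, if_neg (by omega : ¬ max i k < min j l)]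
      ring
    · rw [if_neg h1]
      by_cases h3 : l ≤ j
      · rw [if_pos h3, if_pos (by omega : max i k < min j l),
          (by omega : max i k = i), (by omega : min j l = l)]
        field_simp
      · rw [if_neg h3, if_pos (by omega : max i k < min j l),
          (by omega : max i k = i), (by omega : min j l = j)]
        field_simp

lemma diag_sum (n : ℕ) (w s : ℕ → ℝ)
    (hmono : ∀ a, 1 ≤ a → a < n → s a < s (a + 1))
    (i j : ℕ) (hi : 1 ≤ i) (hij : i < j) (hj : j ≤ n) :
    ∑ m ∈ Finset.Icc 1 (n - 1), gg s m * qq w s i j m m = w (j - i) := by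
  have hO := overlap_sum n s i j i j hi hj hi hj
  have h1 : ∀ m, gg s m * qq w s i j m m
      = (ffi i j m * ffi i j m * gg s m) * (w (j - i) / (s j - s i)) := by
    intro m; simp only [qq]; ring
  rw [Finset.sum_congr rfl fun m _ => h1 m, ← Finset.sum_mul, hO,
    if_pos (by omega : max i i < min j j), max_self, min_self]
  have hne : s j - s i ≠ 0 := sub_ne_zero.2 (slt n s hmono i j hi hij hj).ne'
  field_simp

/-- Expansion of the quadruple sum as a nonnegative quadratic form. -/
lemma expand_sum (K n : ℕ) (w s : ℕ → ℝ)
    (hmono : ∀ a, 1 ≤ a → a < n → s a < s (a + 1)) :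
    (∑ i ∈ Finset.Icc 1 (n - 1), ∑ j ∈ Finset.Icc (i + 1) (min n (i + K)),
      ∑ k ∈ Finset.Icc 1 (n - 1), ∑ l ∈ Finset.Icc (k + 1) (min n (k + K)),
        w (j - i) * w (l - k) * bCoef s i j k l)
      = ∑ m ∈ Finset.Icc 1 (n - 1), ∑ m' ∈ Finset.Icc 1 (n - 1),
          gg s m * gg s m' * (ccP K n w s m m') ^ 2 := by
  calc (∑ i ∈ Finset.Icc 1 (n - 1), ∑ j ∈ Finset.Icc (i + 1) (min n (i + K)),
          ∑ k ∈ Finset.Icc 1 (n - 1), ∑ l ∈ Finset.Icc (k + 1) (min n (k + K)),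
            w (j - i) * w (l - k) * bCoef s i j k l)
      = ∑ i ∈ Finset.Icc 1 (n - 1), ∑ j ∈ Finset.Icc (i + 1) (min n (i + K)),
          ∑ q ∈ PF K n, w (j - i) * w (q.2 - q.1) * bCoef s i j q.1 q.2 :=
        Finset.sum_congr rfl fun i _ => Finset.sum_congr rfl fun j _ =>
          Finset.sum_sigma' _ _ _
    _ = ∑ p ∈ PF K n, ∑ q ∈ PF K n,
          w (p.2 - p.1) * w (q.2 - q.1) * bCoef s p.1 p.2 q.1 q.2 :=
        Finset.sum_sigma' _ _ _
    _ = ∑ p ∈ PF K n, ∑ q ∈ PF K n, ∑ m ∈ Finset.Icc 1 (n - 1), ∑ m' ∈ Finset.Icc 1 (n - 1),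
          gg s m * gg s m' * qq w s p.1 p.2 m m' * qq w s q.1 q.2 m m' := by
        refine Finset.sum_congr rfl fun p hp => Finset.sum_congr rfl fun q hq => ?_
        obtain ⟨h1, h2, h3, _⟩ := mem_PF hp
        obtain ⟨h4, h5, h6, _⟩ := mem_PF hq
        exact quad_eq K n w s hmono _ _ _ _ h1 h2 h3 h4 h5 h6
    _ = ∑ p ∈ PF K n, ∑ m ∈ Finset.Icc 1 (n - 1), ∑ q ∈ PF K n, ∑ m' ∈ Finset.Icc 1 (n - 1),
          gg s m * gg s m' * qq w s p.1 p.2 m m' * qq w s q.1 q.2 m m' :=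
        Finset.sum_congr rfl fun p _ => Finset.sum_comm
    _ = ∑ p ∈ PF K n, ∑ m ∈ Finset.Icc 1 (n - 1), ∑ m' ∈ Finset.Icc 1 (n - 1), ∑ q ∈ PF K n,
          gg s m * gg s m' * qq w s p.1 p.2 m m' * qq w s q.1 q.2 m m' :=
        Finset.sum_congr rfl fun p _ => Finset.sum_congr rfl fun m _ => Finset.sum_comm
    _ = ∑ m ∈ Finset.Icc 1 (n - 1), ∑ p ∈ PF K n, ∑ m' ∈ Finset.Icc 1 (n - 1), ∑ q ∈ PF K n,
          gg s m * gg s m' * qq w s p.1 p.2 m m' * qq w s q.1 q.2 m m' := Finset.sum_comm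
    _ = ∑ m ∈ Finset.Icc 1 (n - 1), ∑ m' ∈ Finset.Icc 1 (n - 1), ∑ p ∈ PF K n, ∑ q ∈ PF K n,
          gg s m * gg s m' * qq w s p.1 p.2 m m' * qq w s q.1 q.2 m m' :=
        Finset.sum_congr rfl fun m _ => Finset.sum_comm
    _ = ∑ m ∈ Finset.Icc 1 (n - 1), ∑ m' ∈ Finset.Icc 1 (n - 1),
          gg s m * gg s m' * (ccP K n w s m m') ^ 2 := by
        refine Finset.sum_congr rfl fun m _ => Finset.sum_congr rfl fun m' _ => ?_
        rw [sq, ccP, Finset.sum_mul_sum, Finset.mul_sum]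
        refine Finset.sum_congr rfl fun p _ => ?_
        rw [Finset.mul_sum]
        refine Finset.sum_congr rfl fun q _ => ?_
        ring

lemma gg_nonneg (n : ℕ) (s : ℕ → ℝ)
    (hmono : ∀ a, 1 ≤ a → a < n → s a < s (a + 1))
    {m : ℕ} (hm : m ∈ Finset.Icc 1 (n - 1)) : 0 ≤ gg s m := by
  simp only [Finset.mem_Icc] at hm
  exact sub_nonneg.2 (hmono m (by omega) (by omega)).le

lemma quad_sum_nonneg (K n : ℕ) (w s : ℕ → ℝ)
    (hmono : ∀ a, 1 ≤ a → a < n → s a < s (a + 1)) :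
    0 ≤ ∑ i ∈ Finset.Icc 1 (n - 1), ∑ j ∈ Finset.Icc (i + 1) (min n (i + K)),
      ∑ k ∈ Finset.Icc 1 (n - 1), ∑ l ∈ Finset.Icc (k + 1) (min n (k + K)),
        w (j - i) * w (l - k) * bCoef s i j k l := by
  rw [expand_sum K n w s hmono]
  refine Finset.sum_nonneg fun m hm => Finset.sum_nonneg fun m' hm' => ?_
  have h1 := gg_nonneg n s hmono hm
  have h2 := gg_nonneg n s hmono hm'
  positivity

lemma ccP_symm (K n : ℕ) (w s : ℕ → ℝ) (m m' : ℕ) :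
    ccP K n w s m m' = ccP K n w s m' m :=
  Finset.sum_congr rfl fun p _ => by unfold qq; ring

lemma NN_symm (K n m m' : ℕ) : NN K n m m' = NN K n m' m :=
  Finset.sum_congr rfl fun p _ => by ring

lemma NN_nonneg (K n m m' : ℕ) : 0 ≤ NN K n m m' :=
  Finset.sum_nonneg fun p _ => mul_nonneg (ffi_nonneg _ _ _) (ffi_nonneg _ _ _)

lemma sum_ffi_le (K n : ℕ) {p : (_ : ℕ) × ℕ} (hp : p ∈ PF K n) :
    ∑ m ∈ Finset.Icc 1 (n - 1), ffi p.1 p.2 m ≤ (K : ℝ) := by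
  obtain ⟨h1, h2, h3, h4⟩ := mem_PF hp
  unfold ffi
  rw [Finset.sum_boole]
  have hsub : (Finset.Icc 1 (n - 1)).filter (fun m => p.1 ≤ m ∧ m < p.2)
      ⊆ Finset.Ico p.1 p.2 := by
    intro m hm
    simp only [Finset.mem_filter, Finset.mem_Icc, Finset.mem_Ico] at *
    omega
  calc (((Finset.Icc 1 (n - 1)).filter (fun m => p.1 ≤ m ∧ m < p.2)).card : ℝ)
      ≤ ((Finset.Ico p.1 p.2).card : ℝ) := Nat.cast_le.2 (Finset.card_le_card hsub)
    _ = ((p.2 - p.1 : ℕ) : ℝ) := by rw [Nat.card_Ico]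
    _ ≤ (K : ℝ) := Nat.cast_le.2 (by omega)

lemma NN_le (K n m m' : ℕ) : NN K n m m' ≤ (K : ℝ) ^ 2 := by
  have h1 : NN K n m m' ≤ ∑ p ∈ PF K n, ffi p.1 p.2 m :=
    Finset.sum_le_sum fun p _ => by
      calc ffi p.1 p.2 m * ffi p.1 p.2 m' ≤ ffi p.1 p.2 m * 1 :=
            mul_le_mul_of_nonneg_left (ffi_le_one _ _ _) (ffi_nonneg _ _ _)
        _ = ffi p.1 p.2 m := mul_one _
  have h2 : ∑ p ∈ PF K n, ffi p.1 p.2 m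
      = (((PF K n).filter (fun p => p.1 ≤ m ∧ m < p.2)).card : ℝ) := by
    unfold ffi
    rw [Finset.sum_boole]
  have h3 : (PF K n).filter (fun p => p.1 ≤ m ∧ m < p.2)
      ⊆ (Finset.Icc (m + 1 - K) m).sigma (fun i => Finset.Icc (i + 1) (i + K)) := by
    intro p hp
    simp only [Finset.mem_filter, PF, Finset.mem_sigma, Finset.mem_Icc] at *
    omega
  have h4 : ((Finset.Icc (m + 1 - K) m).sigma
      (fun i => Finset.Icc (i + 1) (i + K))).card ≤ K * K := by
    rw [Finset.card_sigma]
    calc ∑ i ∈ Finset.Icc (m + 1 - K) m, (Finset.Icc (i + 1) (i + K)).card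
        ≤ ∑ _i ∈ Finset.Icc (m + 1 - K) m, K :=
          Finset.sum_le_sum fun i _ => by rw [Nat.card_Icc]; omega
      _ = (Finset.Icc (m + 1 - K) m).card * K := by rw [Finset.sum_const, smul_eq_mul]
      _ ≤ K * K := Nat.mul_le_mul_right K (by rw [Nat.card_Icc]; omega)
  calc NN K n m m' ≤ ∑ p ∈ PF K n, ffi p.1 p.2 m := h1
    _ = (((PF K n).filter (fun p => p.1 ≤ m ∧ m < p.2)).card : ℝ) := h2
    _ ≤ ((K * K : ℕ) : ℝ) :=
        Nat.cast_le.2 (le_trans (Finset.card_le_card h3) h4)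
    _ = (K : ℝ) ^ 2 := by push_cast; ring

lemma gcc_nonneg (K n : ℕ) (w s : ℕ → ℝ)
    (hw : ∀ k ∈ Finset.Icc 1 K, 0 ≤ w k)
    (hmono : ∀ a, 1 ≤ a → a < n → s a < s (a + 1))
    (m m' : ℕ) (hm : m ∈ Finset.Icc 1 (n - 1)) :
    0 ≤ gg s m * ccP K n w s m m' := by
  refine mul_nonneg (gg_nonneg n s hmono hm) (Finset.sum_nonneg fun p hp => ?_)
  obtain ⟨h1, h2, h3, h4⟩ := mem_PF hp
  have hL : 0 < s p.2 - s p.1 := sub_pos.2 (slt n s hmono _ _ h1 h2 h3)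
  have hwp : 0 ≤ w (p.2 - p.1) := hw _ (Finset.mem_Icc.2 ⟨by omega, by omega⟩)
  unfold qq
  exact mul_nonneg (mul_nonneg (ffi_nonneg _ _ _) (ffi_nonneg _ _ _))
    (div_nonneg hwp hL.le)

lemma gcc_le (K n : ℕ) (w s : ℕ → ℝ)
    (hw : ∀ k ∈ Finset.Icc 1 K, 0 ≤ w k)
    (hmono : ∀ a, 1 ≤ a → a < n → s a < s (a + 1))
    (m m' : ℕ) (hm : m ∈ Finset.Icc 1 (n - 1)) :
    gg s m * ccP K n w s m m' ≤ (∑ k ∈ Finset.Icc 1 K, w k) * NN K n m m' := by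
  simp only [Finset.mem_Icc] at hm
  have hg : 0 ≤ gg s m := sub_nonneg.2 (hmono m (by omega) (by omega)).le
  have hWnn : 0 ≤ ∑ k ∈ Finset.Icc 1 K, w k := Finset.sum_nonneg hw
  rw [ccP, Finset.mul_sum, NN, Finset.mul_sum]
  refine Finset.sum_le_sum fun p hp => ?_
  obtain ⟨h1, h2, h3, h4⟩ := mem_PF hp
  have hL : 0 < s p.2 - s p.1 := sub_pos.2 (slt n s hmono _ _ h1 h2 h3)
  have hwp : 0 ≤ w (p.2 - p.1) := hw _ (Finset.mem_Icc.2 ⟨by omega, by omega⟩)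
  have hwW : w (p.2 - p.1) ≤ ∑ k ∈ Finset.Icc 1 K, w k :=
    Finset.single_le_sum hw (Finset.mem_Icc.2 ⟨by omega, by omega⟩)
  unfold qq ffi
  by_cases hA : p.1 ≤ m ∧ m < p.2
  · by_cases hB : p.1 ≤ m' ∧ m' < p.2
    · rw [if_pos hA, if_pos hB]
      have hgl : gg s m ≤ s p.2 - s p.1 := by
        have e1 : s p.1 ≤ s m := sle n s hmono p.1 m h1 hA.1 (by omega)
        have e2 : s (m + 1) ≤ s p.2 := sle n s hmono (m + 1) p.2 (by omega) (by omega) h3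
        unfold gg
        linarith
      calc gg s m * (1 * 1 * (w (p.2 - p.1) / (s p.2 - s p.1)))
          = w (p.2 - p.1) * (gg s m / (s p.2 - s p.1)) := by ring
        _ ≤ (∑ k ∈ Finset.Icc 1 K, w k) * 1 := by
            refine mul_le_mul hwW ((div_le_one hL).2 hgl) (div_nonneg hg hL.le) hWnn
        _ = (∑ k ∈ Finset.Icc 1 K, w k) * (1 * 1) := by ring
    · rw [if_neg hB]
      simp
  · rw [if_neg hA]
    simp

lemma upper_bound (K n : ℕ) (w s : ℕ → ℝ)
    (hw : ∀ k ∈ Finset.Icc 1 K, 0 ≤ w k)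
    (hmono : ∀ a, 1 ≤ a → a < n → s a < s (a + 1)) :
    (2 / (n : ℝ)) *
      (∑ i ∈ Finset.Icc 1 (n - 1), ∑ j ∈ Finset.Icc (i + 1) (min n (i + K)),
        ∑ k ∈ Finset.Icc 1 (n - 1), ∑ l ∈ Finset.Icc (k + 1) (min n (k + K)),
          w (j - i) * w (l - k) * bCoef s i j k l)
      ≤ 2 * (K : ℝ) ^ 5 * (∑ k ∈ Finset.Icc 1 K, w k) ^ 2 := by
  set W := ∑ k ∈ Finset.Icc 1 K, w k with hWdef
  have hWnn : 0 ≤ W := Finset.sum_nonneg hw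
  rcases Nat.eq_zero_or_pos n with hn | hn
  · subst hn
    rw [Finset.Icc_eq_empty (by omega : ¬ (1:ℕ) ≤ 0 - 1), Finset.sum_empty, mul_zero]
    positivity
  · have hn0 : (0 : ℝ) < n := by exact_mod_cast hn
    -- card of PF
    have hcard : ((PF K n).card : ℝ) ≤ (n : ℝ) * K := by
      have hc : (PF K n).card ≤ n * K := by
        rw [PF, Finset.card_sigma]
        calc ∑ i ∈ Finset.Icc 1 (n - 1), (Finset.Icc (i + 1) (min n (i + K))).card
            ≤ ∑ _i ∈ Finset.Icc 1 (n - 1), K :=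
              Finset.sum_le_sum fun i _ => by rw [Nat.card_Icc]; omega
          _ = (Finset.Icc 1 (n - 1)).card * K := by rw [Finset.sum_const, smul_eq_mul]
          _ ≤ n * K := Nat.mul_le_mul_right K (by rw [Nat.card_Icc]; omega)
      calc ((PF K n).card : ℝ) ≤ ((n * K : ℕ) : ℝ) := Nat.cast_le.2 hc
        _ = (n : ℝ) * K := by push_cast; ring
    -- sum of NN
    have hNNsum : ∑ m ∈ Finset.Icc 1 (n - 1), ∑ m' ∈ Finset.Icc 1 (n - 1), NN K n m m'
        ≤ (n : ℝ) * (K : ℝ) ^ 3 := by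
      have h1 : ∑ m ∈ Finset.Icc 1 (n - 1), ∑ m' ∈ Finset.Icc 1 (n - 1), NN K n m m'
          = ∑ p ∈ PF K n, (∑ m ∈ Finset.Icc 1 (n - 1), ffi p.1 p.2 m) *
              (∑ m' ∈ Finset.Icc 1 (n - 1), ffi p.1 p.2 m') := by
        calc ∑ m ∈ Finset.Icc 1 (n - 1), ∑ m' ∈ Finset.Icc 1 (n - 1), NN K n m m'
            = ∑ m ∈ Finset.Icc 1 (n - 1), ∑ p ∈ PF K n, ∑ m' ∈ Finset.Icc 1 (n - 1),
                ffi p.1 p.2 m * ffi p.1 p.2 m' :=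
              Finset.sum_congr rfl fun m _ => Finset.sum_comm
          _ = ∑ p ∈ PF K n, ∑ m ∈ Finset.Icc 1 (n - 1), ∑ m' ∈ Finset.Icc 1 (n - 1),
                ffi p.1 p.2 m * ffi p.1 p.2 m' := Finset.sum_comm
          _ = ∑ p ∈ PF K n, (∑ m ∈ Finset.Icc 1 (n - 1), ffi p.1 p.2 m) *
                (∑ m' ∈ Finset.Icc 1 (n - 1), ffi p.1 p.2 m') :=
              Finset.sum_congr rfl fun p _ => (Finset.sum_mul_sum _ _ _ _).symm
      rw [h1]
      calc ∑ p ∈ PF K n, (∑ m ∈ Finset.Icc 1 (n - 1), ffi p.1 p.2 m) *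
              (∑ m' ∈ Finset.Icc 1 (n - 1), ffi p.1 p.2 m')
          ≤ ∑ _p ∈ PF K n, (K : ℝ) * (K : ℝ) := by
            refine Finset.sum_le_sum fun p hp => ?_
            have hnn : 0 ≤ ∑ m ∈ Finset.Icc 1 (n - 1), ffi p.1 p.2 m :=
              Finset.sum_nonneg fun m _ => ffi_nonneg _ _ _
            exact mul_le_mul (sum_ffi_le K n hp) (sum_ffi_le K n hp) hnn (by positivity)
        _ = ((PF K n).card : ℝ) * ((K : ℝ) * K) := by
            rw [Finset.sum_const, nsmul_eq_mul]
        _ ≤ ((n : ℝ) * K) * ((K : ℝ) * K) := by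
            refine mul_le_mul_of_nonneg_right hcard (by positivity)
        _ = (n : ℝ) * (K : ℝ) ^ 3 := by ring
    -- bound the expanded sum
    have hS : (∑ i ∈ Finset.Icc 1 (n - 1), ∑ j ∈ Finset.Icc (i + 1) (min n (i + K)),
        ∑ k ∈ Finset.Icc 1 (n - 1), ∑ l ∈ Finset.Icc (k + 1) (min n (k + K)),
          w (j - i) * w (l - k) * bCoef s i j k l)
        ≤ (n : ℝ) * (K : ℝ) ^ 5 * W ^ 2 := by
      rw [expand_sum K n w s hmono]
      calc ∑ m ∈ Finset.Icc 1 (n - 1), ∑ m' ∈ Finset.Icc 1 (n - 1),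
              gg s m * gg s m' * (ccP K n w s m m') ^ 2
          ≤ ∑ m ∈ Finset.Icc 1 (n - 1), ∑ m' ∈ Finset.Icc 1 (n - 1),
              W ^ 2 * (K : ℝ) ^ 2 * NN K n m m' := by
            refine Finset.sum_le_sum fun m hm => Finset.sum_le_sum fun m' hm' => ?_
            have e1 : gg s m * gg s m' * (ccP K n w s m m') ^ 2
                = (gg s m * ccP K n w s m m') * (gg s m' * ccP K n w s m m') := by ring
            have e2 : gg s m' * ccP K n w s m m' ≤ W * NN K n m m' := by
              rw [ccP_symm, NN_symm K n m m']
              exact gcc_le K n w s hw hmono m' m hm'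
            have e3 : gg s m * ccP K n w s m m' ≤ W * NN K n m m' :=
              gcc_le K n w s hw hmono m m' hm
            have e4 : 0 ≤ gg s m * ccP K n w s m m' := gcc_nonneg K n w s hw hmono m m' hm
            have e5 : 0 ≤ gg s m' * ccP K n w s m m' := by
              rw [ccP_symm]
              exact gcc_nonneg K n w s hw hmono m' m hm'
            have e6 : 0 ≤ W * NN K n m m' := mul_nonneg hWnn (NN_nonneg K n m m')
            calc gg s m * gg s m' * (ccP K n w s m m') ^ 2
                = (gg s m * ccP K n w s m m') * (gg s m' * ccP K n w s m m') := e1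
              _ ≤ (W * NN K n m m') * (W * NN K n m m') := mul_le_mul e3 e2 e5 e6
              _ = W ^ 2 * (NN K n m m' * NN K n m m') := by ring
              _ ≤ W ^ 2 * ((K : ℝ) ^ 2 * NN K n m m') := by
                  refine mul_le_mul_of_nonneg_left ?_ (sq_nonneg W)
                  exact mul_le_mul_of_nonneg_right (NN_le K n m m') (NN_nonneg K n m m')
              _ = W ^ 2 * (K : ℝ) ^ 2 * NN K n m m' := by ring
        _ = W ^ 2 * (K : ℝ) ^ 2 *
              ∑ m ∈ Finset.Icc 1 (n - 1), ∑ m' ∈ Finset.Icc 1 (n - 1), NN K n m m' := by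
            rw [Finset.mul_sum]
            exact Finset.sum_congr rfl fun m _ => by rw [Finset.mul_sum]
        _ ≤ W ^ 2 * (K : ℝ) ^ 2 * ((n : ℝ) * (K : ℝ) ^ 3) :=
            mul_le_mul_of_nonneg_left hNNsum (by positivity)
        _ = (n : ℝ) * (K : ℝ) ^ 5 * W ^ 2 := by ring
    calc (2 / (n : ℝ)) * (∑ i ∈ Finset.Icc 1 (n - 1), ∑ j ∈ Finset.Icc (i + 1) (min n (i + K)),
            ∑ k ∈ Finset.Icc 1 (n - 1), ∑ l ∈ Finset.Icc (k + 1) (min n (k + K)),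
              w (j - i) * w (l - k) * bCoef s i j k l)
        ≤ (2 / (n : ℝ)) * ((n : ℝ) * (K : ℝ) ^ 5 * W ^ 2) :=
          mul_le_mul_of_nonneg_left hS (by positivity)
      _ = 2 * (K : ℝ) ^ 5 * W ^ 2 := by
          field_simp

lemma aux_main (K n : ℕ) (hK : 1 ≤ K) (hn : K + 1 ≤ n) (w s : ℕ → ℝ)
    (hw : ∀ k ∈ Finset.Icc 1 K, 0 ≤ w k)
    (hmono : ∀ a, 1 ≤ a → a < n → s a < s (a + 1)) :
    ((n : ℝ) - K) ^ 2 * (∑ k ∈ Finset.Icc 1 K, w k) ^ 2 ≤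
      ((n : ℝ) - 1) *
        ∑ i ∈ Finset.Icc 1 (n - 1), ∑ j ∈ Finset.Icc (i + 1) (min n (i + K)),
          ∑ k ∈ Finset.Icc 1 (n - 1), ∑ l ∈ Finset.Icc (k + 1) (min n (k + K)),
            w (j - i) * w (l - k) * bCoef s i j k l := by
  set W := ∑ k ∈ Finset.Icc 1 K, w k with hWdef
  have hWnn : 0 ≤ W := Finset.sum_nonneg hw
  have hnK : 0 ≤ (n : ℝ) - K := by
    have : (K : ℝ) ≤ (n : ℝ) := by exact_mod_cast (by omega : K ≤ n)
    linarith
  have hn1 : 0 ≤ (n : ℝ) - 1 := by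
    have : (1 : ℝ) ≤ (n : ℝ) := by exact_mod_cast (by omega : 1 ≤ n)
    linarith
  -- trace identity
  have htr : ∑ m ∈ Finset.Icc 1 (n - 1), gg s m * ccP K n w s m m
      = ∑ p ∈ PF K n, w (p.2 - p.1) := by
    calc ∑ m ∈ Finset.Icc 1 (n - 1), gg s m * ccP K n w s m m
        = ∑ m ∈ Finset.Icc 1 (n - 1), ∑ p ∈ PF K n, gg s m * qq w s p.1 p.2 m m :=
          Finset.sum_congr rfl fun m _ => by rw [ccP, Finset.mul_sum]
      _ = ∑ p ∈ PF K n, ∑ m ∈ Finset.Icc 1 (n - 1), gg s m * qq w s p.1 p.2 m m :=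
          Finset.sum_comm
      _ = ∑ p ∈ PF K n, w (p.2 - p.1) := Finset.sum_congr rfl fun p hp => by
          obtain ⟨h1, h2, h3, _⟩ := mem_PF hp
          exact diag_sum n w s hmono p.1 p.2 h1 h2 h3
  -- trace lower bound
  have hT : ((n : ℝ) - K) * W ≤ ∑ p ∈ PF K n, w (p.2 - p.1) := by
    rw [PF, Finset.sum_sigma]
    have hstep : ∀ i ∈ Finset.Icc 1 (n - K),
        ∑ j ∈ Finset.Icc (i + 1) (min n (i + K)), w (j - i) = W := by
      intro i hi
      simp only [Finset.mem_Icc] at hi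
      rw [min_eq_right (by omega : i + K ≤ n)]
      rw [show Finset.Icc (i + 1) (i + K) = Finset.map (addLeftEmbedding i) (Finset.Icc 1 K) by
        rw [Finset.map_add_left_Icc]]
      rw [Finset.sum_map]
      refine Finset.sum_congr rfl fun d hd => ?_
      simp only [addLeftEmbedding_apply]
      congr 1
      omega
    have hsub : Finset.Icc 1 (n - K) ⊆ Finset.Icc 1 (n - 1) := by
      intro x hx
      simp only [Finset.mem_Icc] at *
      omega
    have hcardIcc : ((Finset.Icc 1 (n - K)).card : ℝ) = (n : ℝ) - K := by
      rw [Nat.card_Icc]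
      have e : (n - K + 1 - 1 : ℕ) = n - K := by omega
      rw [e, Nat.cast_sub (by omega)]
    calc ((n : ℝ) - K) * W = ∑ _i ∈ Finset.Icc 1 (n - K), W := by
          rw [Finset.sum_const, nsmul_eq_mul, hcardIcc]
      _ = ∑ i ∈ Finset.Icc 1 (n - K), ∑ j ∈ Finset.Icc (i + 1) (min n (i + K)), w (j - i) :=
          (Finset.sum_congr rfl hstep).symm
      _ ≤ ∑ i ∈ Finset.Icc 1 (n - 1), ∑ j ∈ Finset.Icc (i + 1) (min n (i + K)), w (j - i) :=
          Finset.sum_le_sum_of_subset_of_nonneg hsub fun i _ _ =>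
            Finset.sum_nonneg fun j hj => by
              simp only [Finset.mem_Icc] at hj
              exact hw _ (Finset.mem_Icc.2 ⟨by omega, by omega⟩)
  -- Cauchy-Schwarz
  have hcard : ((Finset.Icc 1 (n - 1)).card : ℝ) = (n : ℝ) - 1 := by
    rw [Nat.card_Icc]
    have e : (n - 1 + 1 - 1 : ℕ) = n - 1 := by omega
    rw [e, Nat.cast_sub (by omega)]
    norm_num
  have hCS : (∑ m ∈ Finset.Icc 1 (n - 1), gg s m * ccP K n w s m m) ^ 2
      ≤ ((n : ℝ) - 1) * ∑ m ∈ Finset.Icc 1 (n - 1), (gg s m * ccP K n w s m m) ^ 2 := by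
    have h := sq_sum_le_card_mul_sum_sq (s := Finset.Icc 1 (n - 1))
      (f := fun m => gg s m * ccP K n w s m m)
    rwa [hcard] at h
  -- diagonal bound
  have hdiag : ∑ m ∈ Finset.Icc 1 (n - 1), (gg s m * ccP K n w s m m) ^ 2
      ≤ ∑ m ∈ Finset.Icc 1 (n - 1), ∑ m' ∈ Finset.Icc 1 (n - 1),
          gg s m * gg s m' * (ccP K n w s m m') ^ 2 := by
    refine Finset.sum_le_sum fun m hm => ?_
    have h0 : ∀ m' ∈ Finset.Icc 1 (n - 1),
        0 ≤ gg s m * gg s m' * (ccP K n w s m m') ^ 2 := fun m' hm' => by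
      have e1 := gg_nonneg n s hmono hm
      have e2 := gg_nonneg n s hmono hm'
      positivity
    have h := Finset.single_le_sum h0 hm
    calc (gg s m * ccP K n w s m m) ^ 2
        = gg s m * gg s m * (ccP K n w s m m) ^ 2 := by ring
      _ ≤ _ := h
  calc ((n : ℝ) - K) ^ 2 * W ^ 2 = (((n : ℝ) - K) * W) ^ 2 := by ring
    _ ≤ (∑ p ∈ PF K n, w (p.2 - p.1)) ^ 2 :=
        pow_le_pow_left₀ (mul_nonneg hnK hWnn) hT 2
    _ = (∑ m ∈ Finset.Icc 1 (n - 1), gg s m * ccP K n w s m m) ^ 2 := by rw [htr]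
    _ ≤ ((n : ℝ) - 1) * ∑ m ∈ Finset.Icc 1 (n - 1), (gg s m * ccP K n w s m m) ^ 2 := hCS
    _ ≤ ((n : ℝ) - 1) * ∑ m ∈ Finset.Icc 1 (n - 1), ∑ m' ∈ Finset.Icc 1 (n - 1),
          gg s m * gg s m' * (ccP K n w s m m') ^ 2 :=
        mul_le_mul_of_nonneg_left hdiag hn1
    _ = ((n : ℝ) - 1) *
          ∑ i ∈ Finset.Icc 1 (n - 1), ∑ j ∈ Finset.Icc (i + 1) (min n (i + K)),
            ∑ k ∈ Finset.Icc 1 (n - 1), ∑ l ∈ Finset.Icc (k + 1) (min n (k + K)),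
              w (j - i) * w (l - k) * bCoef s i j k l := by
        rw [expand_sum K n w s hmono]

/-- Lemma 4: the leading term `A_n` of the asymptotic variance `τ_n²` of the
weighted pairwise likelihood estimators satisfies
`lim inf A_n ≥ 2 (∑_{k=1}^K w_k)²`, for triangular arrays of strictly
increasing observation points in `[0,1]` and nonnegative weights not all zero. -/
theorem liminf_variance_lower_bound (K : ℕ) (hK : 1 ≤ K) (w : ℕ → ℝ)
    (hw : ∀ k ∈ Finset.Icc 1 K, 0 ≤ w k)
    (hw0 : ∃ k ∈ Finset.Icc 1 K, w k ≠ 0)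
    (s : ℕ → ℕ → ℝ)
    (hs : ∀ n, ∀ i, 1 ≤ i → i ≤ n → s n i ∈ Set.Icc (0 : ℝ) 1)
    (hmono : ∀ n, ∀ i, 1 ≤ i → i < n → s n i < s n (i + 1)) :
    2 * (∑ k ∈ Finset.Icc 1 K, w k) ^ 2 ≤
      Filter.atTop.liminf (fun n : ℕ =>
        (2 / (n : ℝ)) *
          ∑ i ∈ Finset.Icc 1 (n - 1), ∑ j ∈ Finset.Icc (i + 1) (min n (i + K)),
            ∑ k ∈ Finset.Icc 1 (n - 1), ∑ l ∈ Finset.Icc (k + 1) (min n (k + K)),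
              w (j - i) * w (l - k) * bCoef (s n) i j k l) := by
  set W := ∑ k ∈ Finset.Icc 1 K, w k with hWdef
  have hWnn : 0 ≤ W := Finset.sum_nonneg hw
  set A : ℕ → ℝ := fun n : ℕ =>
    (2 / (n : ℝ)) *
      ∑ i ∈ Finset.Icc 1 (n - 1), ∑ j ∈ Finset.Icc (i + 1) (min n (i + K)),
        ∑ k ∈ Finset.Icc 1 (n - 1), ∑ l ∈ Finset.Icc (k + 1) (min n (k + K)),
          w (j - i) * w (l - k) * bCoef (s n) i j k l with hAdef
  set φ : ℕ → ℝ := fun n : ℕ => 2 * W ^ 2 - 4 * (K : ℝ) * W ^ 2 * (1 / (n : ℝ)) with hφdef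
  have hφ : Tendsto φ atTop (nhds (2 * W ^ 2 - 4 * (K : ℝ) * W ^ 2 * 0)) :=
    tendsto_const_nhds.sub (tendsto_const_nhds.mul tendsto_one_div_atTop_nhds_zero_nat)
  rw [mul_zero, sub_zero] at hφ
  have hev : ∀ n, K + 1 ≤ n → φ n ≤ A n := by
    intro n hn
    have hmain := aux_main K n hK hn w (s n) hw (hmono n)
    rw [← hWdef] at hmain
    have hn0 : (0 : ℝ) < (n : ℝ) := by exact_mod_cast (by omega : 0 < n)
    have hn1 : (0 : ℝ) < (n : ℝ) - 1 := by
      have : (2 : ℝ) ≤ (n : ℝ) := by exact_mod_cast (by omega : 2 ≤ n)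
      linarith
    have hS1 : ((n : ℝ) - 2 * K) * W ^ 2 ≤
        ∑ i ∈ Finset.Icc 1 (n - 1), ∑ j ∈ Finset.Icc (i + 1) (min n (i + K)),
          ∑ k ∈ Finset.Icc 1 (n - 1), ∑ l ∈ Finset.Icc (k + 1) (min n (k + K)),
            w (j - i) * w (l - k) * bCoef (s n) i j k l := by
      refine le_of_mul_le_mul_left (le_trans ?_ hmain) hn1
      nlinarith [mul_nonneg (sq_nonneg ((K : ℝ) - 1)) (sq_nonneg W),
        mul_nonneg hn1.le (sq_nonneg W)]
    have heq : (2 / (n : ℝ)) * (((n : ℝ) - 2 * K) * W ^ 2) = φ n := by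
      rw [hφdef]
      field_simp
      ring
    calc φ n = (2 / (n : ℝ)) * (((n : ℝ) - 2 * K) * W ^ 2) := heq.symm
      _ ≤ A n := mul_le_mul_of_nonneg_left hS1 (by positivity)
  have hub : ∀ n : ℕ, A n ≤ 2 * (K : ℝ) ^ 5 * W ^ 2 := fun n =>
    upper_bound K n w (s n) hw (hmono n)
  have h1 : atTop.liminf φ ≤ atTop.liminf A :=
    Filter.liminf_le_liminf (eventually_atTop.2 ⟨K + 1, hev⟩)
      hφ.isBoundedUnder_ge
      (Filter.isBoundedUnder_of ⟨2 * (K : ℝ) ^ 5 * W ^ 2, hub⟩).isCoboundedUnder_ge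
  rw [hφ.liminf_eq] at h1
  exact h1
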